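/- Let H_0 be a fixed Hermitian n×n matrix and f : ℝ → ℝ convex and L-Lipschitz. Then the map H ↦ (1/n)∑_{i=1}^n f(λ_i(H + H_0)), defined on the real vector space of n×n Hermitian matrices equipped with the Hilbert–Schmidt (Frobenius) norm, is convex and (L/√n)-Lipschitz, where λ_1, ..., λ_n denote the eigenvalues of the Hermitian matrix. -/

import Mathlib

open Matrix

private lemma conj_mul_ofReal (z : ℂ) : (starRingEnd ℂ) z * z = ((‖z‖ ^ 2 : ℝ) : ℂ) := by
  rw [mul_comm, Complex.mul_conj, Complex.normSq_eq_norm_sq]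

private lemma conj_mul_re (z : ℂ) : ((starRingEnd ℂ) z * z).re = ‖z‖ ^ 2 := by
  rw [conj_mul_ofReal, Complex.ofReal_re]

private lemma entry_sq_sum {n : ℕ} (M : Matrix (Fin n) (Fin n) ℂ) :
    ∑ i, ∑ j, ‖M i j‖ ^ 2 = (Matrix.trace (Mᴴ * M)).re := by
  rw [Matrix.trace, Finset.sum_comm]
  rw [Complex.re_sum]
  refine Finset.sum_congr rfl fun j _ => ?_
  rw [Matrix.diag, Matrix.mul_apply, Complex.re_sum]
  exact Finset.sum_congr rfl fun i _ => by
    rw [Matrix.conjTranspose_apply, ← conj_mul_re]; rfl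

private lemma hs_inv {n : ℕ} (U V M : Matrix (Fin n) (Fin n) ℂ)
    (hU : star U * U = 1) (hV : star V * V = 1) :
    ∑ i, ∑ j, ‖(U * M * star V) i j‖ ^ 2 = ∑ i, ∑ j, ‖M i j‖ ^ 2 := by
  rw [entry_sq_sum, entry_sq_sum]
  congr 1
  have h1 : (U * M * star V)ᴴ * (U * M * star V) = V * (Mᴴ * M) * star V := by
    have : (U * M * star V)ᴴ = V * Mᴴ * star U := by
      simp [Matrix.conjTranspose_mul, Matrix.star_eq_conjTranspose, Matrix.mul_assoc]
    rw [this]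
    calc V * Mᴴ * star U * (U * M * star V)
        = V * Mᴴ * (star U * U) * M * star V := by
          simp only [Matrix.mul_assoc]
      _ = V * (Mᴴ * M) * star V := by rw [hU]; simp only [Matrix.mul_one, Matrix.mul_assoc]
  rw [h1, Matrix.trace_mul_comm, ← Matrix.mul_assoc, hV, Matrix.one_mul]

private lemma unitary_row_sum {n : ℕ} (Q : Matrix (Fin n) (Fin n) ℂ) (hQ : Q * star Q = 1)
    (i : Fin n) : ∑ j, ‖Q i j‖ ^ 2 = 1 := by
  have h := congrArg (fun M : Matrix (Fin n) (Fin n) ℂ => (M i i).re) hQ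
  simp only [Matrix.mul_apply, Matrix.one_apply_eq, Complex.one_re, Complex.re_sum] at h
  rw [← h]
  refine Finset.sum_congr rfl fun j _ => ?_
  rw [Matrix.star_apply, mul_comm, ← conj_mul_re]; rfl

private lemma unitary_col_sum {n : ℕ} (Q : Matrix (Fin n) (Fin n) ℂ) (hQ : star Q * Q = 1)
    (j : Fin n) : ∑ i, ‖Q i j‖ ^ 2 = 1 := by
  have h := congrArg (fun M : Matrix (Fin n) (Fin n) ℂ => (M j j).re) hQ
  simp only [Matrix.mul_apply, Matrix.one_apply_eq, Complex.one_re, Complex.re_sum] at h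
  rw [← h]
  refine Finset.sum_congr rfl fun i _ => ?_
  rw [Matrix.star_apply, ← conj_mul_re]; rfl

private lemma exists_weights {n : ℕ} (A B : Matrix (Fin n) (Fin n) ℂ)
    (hA : A.IsHermitian) (hB : B.IsHermitian) :
    ∃ p : Fin n → Fin n → ℝ, (∀ i j, 0 ≤ p i j) ∧ (∀ i, ∑ j, p i j = 1) ∧
      (∀ j, ∑ i, p i j = 1) ∧
      ∑ i, ∑ j, p i j * (hA.eigenvalues i - hB.eigenvalues j) ^ 2
        = ∑ i, ∑ j, ‖A i j - B i j‖ ^ 2 := by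
  set U := (hA.eigenvectorUnitary : Matrix (Fin n) (Fin n) ℂ) with hUdef
  set V := (hB.eigenvectorUnitary : Matrix (Fin n) (Fin n) ℂ) with hVdef
  have hU1 : star U * U = 1 := Matrix.mem_unitaryGroup_iff'.mp hA.eigenvectorUnitary.2
  have hU2 : U * star U = 1 := Matrix.mem_unitaryGroup_iff.mp hA.eigenvectorUnitary.2
  have hV1 : star V * V = 1 := Matrix.mem_unitaryGroup_iff'.mp hB.eigenvectorUnitary.2
  have hV2 : V * star V = 1 := Matrix.mem_unitaryGroup_iff.mp hB.eigenvectorUnitary.2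
  set Q := star U * V with hQdef
  have hQ1 : star Q * Q = 1 := by
    rw [hQdef, Matrix.star_mul, star_star]
    calc star V * U * (star U * V) = star V * (U * star U) * V := by simp only [Matrix.mul_assoc]
      _ = 1 := by rw [hU2, Matrix.mul_one, hV1]
  have hQ2 : Q * star Q = 1 := by
    rw [hQdef, Matrix.star_mul, star_star]
    calc star U * V * (star V * U) = star U * (V * star V) * U := by simp only [Matrix.mul_assoc]
      _ = 1 := by rw [hV2, Matrix.mul_one, hU1]
  set D := Matrix.diagonal ((RCLike.ofReal : ℝ → ℂ) ∘ hA.eigenvalues) with hDdef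
  set E := Matrix.diagonal ((RCLike.ofReal : ℝ → ℂ) ∘ hB.eigenvalues) with hEdef
  have key : A - B = U * (D * Q - Q * E) * star V := by
    rw [Matrix.mul_sub, Matrix.sub_mul]
    congr 1
    · calc A = U * D * star U := hA.spectral_theorem
        _ = U * D * star U * (V * star V) := by rw [hV2, Matrix.mul_one]
        _ = U * (D * Q) * star V := by rw [hQdef]; simp only [Matrix.mul_assoc]
    · calc B = V * E * star V := hB.spectral_theorem
        _ = U * star U * (V * E * star V) := by rw [hU2, Matrix.one_mul]
        _ = U * (Q * E) * star V := by rw [hQdef]; simp only [Matrix.mul_assoc]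
  refine ⟨fun i j => ‖Q i j‖ ^ 2, fun i j => sq_nonneg _, ?_, ?_, ?_⟩
  · exact fun i => unitary_row_sum Q hQ2 i
  · exact fun j => unitary_col_sum Q hQ1 j
  · have h2 : ∑ i, ∑ j, ‖A i j - B i j‖ ^ 2 = ∑ i, ∑ j, ‖(D * Q - Q * E) i j‖ ^ 2 := by
      have : ∀ i j, (A - B) i j = A i j - B i j := fun i j => rfl
      simp only [← this, key]
      exact hs_inv U V _ hU1 hV1
    rw [h2]
    refine Finset.sum_congr rfl fun i _ => Finset.sum_congr rfl fun j _ => ?_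
    have : (D * Q - Q * E) i j
        = ((hA.eigenvalues i - hB.eigenvalues j : ℝ) : ℂ) * Q i j := by
      rw [Matrix.sub_apply, hDdef, hEdef, Matrix.diagonal_mul, Matrix.mul_diagonal]
      simp only [Function.comp_apply]
      rw [show ((RCLike.ofReal (hA.eigenvalues i) : ℂ)) = ((hA.eigenvalues i : ℝ) : ℂ) from rfl,
        show ((RCLike.ofReal (hB.eigenvalues j) : ℂ)) = ((hB.eigenvalues j : ℝ) : ℂ) from rfl,
        Complex.ofReal_sub]
      ring
    rw [this, norm_mul, mul_pow, Complex.norm_real, Real.norm_eq_abs, sq_abs, mul_comm]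

private lemma star_mul_diag_mul_apply {n : ℕ} (Q : Matrix (Fin n) (Fin n) ℂ) (α : Fin n → ℝ)
    (k : Fin n) :
    (star Q * Matrix.diagonal (fun i => (α i : ℂ)) * Q) k k
      = ((∑ i, ‖Q i k‖ ^ 2 * α i : ℝ) : ℂ) := by
  rw [Matrix.mul_apply, Complex.ofReal_sum]
  refine Finset.sum_congr rfl fun i _ => ?_
  rw [Matrix.mul_diagonal, Matrix.star_apply, mul_right_comm,
    show (star (Q i k)) = (starRingEnd ℂ) (Q i k) from rfl, conj_mul_ofReal,
    Complex.ofReal_mul]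

private lemma diag_repr {n : ℕ} (A W : Matrix (Fin n) (Fin n) ℂ) (hA : A.IsHermitian)
    (k : Fin n) :
    (star W * A * W) k k
      = ((∑ i, ‖((star (hA.eigenvectorUnitary : Matrix (Fin n) (Fin n) ℂ) * W)) i k‖ ^ 2
          * hA.eigenvalues i : ℝ) : ℂ) := by
  set U := (hA.eigenvectorUnitary : Matrix (Fin n) (Fin n) ℂ) with hUdef
  have key : star W * A * W = star (star U * W) * Matrix.diagonal
      (fun i => (hA.eigenvalues i : ℂ)) * (star U * W) := by
    conv_lhs => rw [show A = U * Matrix.diagonal ((RCLike.ofReal : ℝ → ℂ) ∘ hA.eigenvalues) * star U from hA.spectral_theorem]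
    have : Matrix.diagonal ((RCLike.ofReal : ℝ → ℂ) ∘ hA.eigenvalues)
        = Matrix.diagonal (fun i => (hA.eigenvalues i : ℂ)) := rfl
    rw [this, Matrix.star_mul, star_star]
    simp only [Matrix.mul_assoc]
  rw [key, star_mul_diag_mul_apply]

private lemma sum_f_le {n : ℕ} (f : ℝ → ℝ) (hconv : ConvexOn ℝ Set.univ f)
    (A W : Matrix (Fin n) (Fin n) ℂ) (hA : A.IsHermitian)
    (hW1 : star W * W = 1) (hW2 : W * star W = 1) :
    ∑ k, f (∑ i, ‖((star (hA.eigenvectorUnitary : Matrix (Fin n) (Fin n) ℂ) * W)) i k‖ ^ 2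
        * hA.eigenvalues i)
      ≤ ∑ i, f (hA.eigenvalues i) := by
  set U := (hA.eigenvectorUnitary : Matrix (Fin n) (Fin n) ℂ) with hUdef
  have hU1 : star U * U = 1 := Matrix.mem_unitaryGroup_iff'.mp hA.eigenvectorUnitary.2
  have hU2 : U * star U = 1 := Matrix.mem_unitaryGroup_iff.mp hA.eigenvectorUnitary.2
  set Q := star U * W with hQdef
  have hQ1 : star Q * Q = 1 := by
    rw [hQdef, Matrix.star_mul, star_star]
    calc star W * U * (star U * W) = star W * (U * star U) * W := by simp only [Matrix.mul_assoc]
      _ = 1 := by rw [hU2, Matrix.mul_one, hW1]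
  have hQ2 : Q * star Q = 1 := by
    rw [hQdef, Matrix.star_mul, star_star]
    calc star U * W * (star W * U) = star U * (W * star W) * U := by simp only [Matrix.mul_assoc]
      _ = 1 := by rw [hW2, Matrix.mul_one, hU1]
  calc ∑ k, f (∑ i, ‖Q i k‖ ^ 2 * hA.eigenvalues i)
      ≤ ∑ k, ∑ i, ‖Q i k‖ ^ 2 * f (hA.eigenvalues i) := by
        refine Finset.sum_le_sum fun k _ => ?_
        have := hconv.map_sum_le (t := Finset.univ) (w := fun i => ‖Q i k‖ ^ 2)
          (p := hA.eigenvalues) (fun i _ => sq_nonneg _) (unitary_col_sum Q hQ1 k)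
          (fun i _ => Set.mem_univ _)
        simpa [smul_eq_mul] using this
    _ = ∑ i, ∑ k, ‖Q i k‖ ^ 2 * f (hA.eigenvalues i) := Finset.sum_comm
    _ = ∑ i, f (hA.eigenvalues i) := by
        refine Finset.sum_congr rfl fun i _ => ?_
        rw [← Finset.sum_mul, unitary_row_sum Q hQ2 i, one_mul]

private lemma isHermitian_real_smul {n : ℕ} (a : ℝ) {x : Matrix (Fin n) (Fin n) ℂ}
    (hx : x.IsHermitian) : (a • x).IsHermitian := by
  ext i j
  rw [Matrix.conjTranspose_apply, Matrix.smul_apply, Matrix.smul_apply, star_smul,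
    star_trivial, ← Matrix.conjTranspose_apply, hx]

private lemma arith_step (n : ℕ) (L S : ℝ) (hL : 0 ≤ L) (hS : 0 ≤ S) :
    (1 / (n : ℝ)) * (L * (Real.sqrt n * Real.sqrt S)) = (L / Real.sqrt n) * Real.sqrt S := by
  rcases Nat.eq_zero_or_pos n with h | h
  · subst h; simp
  · have hn : (0 : ℝ) < n := by exact_mod_cast h
    have h2 : Real.sqrt n * Real.sqrt n = (n : ℝ) := Real.mul_self_sqrt (le_of_lt hn)
    have h3 : Real.sqrt n ≠ 0 := by positivity
    have h4 : (n : ℝ) ≠ 0 := ne_of_gt hn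
    rw [div_mul_eq_mul_div, div_mul_eq_mul_div, one_mul, div_eq_div_iff h4 h3]
    linear_combination L * Real.sqrt S * h2

/-- For `H₀` Hermitian and `f : ℝ → ℝ` convex and `L`-Lipschitz, the linear statistic
`H ↦ (1/n)∑ᵢ f(λᵢ(H + H₀))` is convex on the set of Hermitian matrices and
`(L/√n)`-Lipschitz with respect to the Hilbert–Schmidt norm. -/
theorem linear_statistic_convex_lipschitz
    (n : ℕ) (H₀ : Matrix (Fin n) (Fin n) ℂ) (hH₀ : H₀.IsHermitian)
    (f : ℝ → ℝ) (L : NNReal) (hconv : ConvexOn ℝ Set.univ f) (hlip : LipschitzWith L f)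
    (g : Matrix (Fin n) (Fin n) ℂ → ℝ)
    (hg : ∀ H, g H = @dite _ ((H + H₀).IsHermitian) (Classical.dec _)
      (fun h => (1 / (n : ℝ)) * ∑ i : Fin n, f (h.eigenvalues i)) (fun _ => 0)) :
    ConvexOn ℝ {H : Matrix (Fin n) (Fin n) ℂ | H.IsHermitian} g ∧
      ∀ H₁ H₂ : Matrix (Fin n) (Fin n) ℂ, H₁.IsHermitian → H₂.IsHermitian →
        |g H₁ - g H₂| ≤ ((L : ℝ) / Real.sqrt n) *
          Real.sqrt (∑ i : Fin n, ∑ j : Fin n, ‖H₁ i j - H₂ i j‖ ^ 2) := by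
  have hn0 : (0 : ℝ) ≤ 1 / (n : ℝ) := by positivity
  have hgval : ∀ (H : Matrix (Fin n) (Fin n) ℂ) (h : (H + H₀).IsHermitian),
      g H = (1 / (n : ℝ)) * ∑ i, f (h.eigenvalues i) := by
    intro H h
    rw [hg H, dif_pos h]
  constructor
  · -- Convexity
    constructor
    · intro x hx y hy a b ha hb hab
      exact (isHermitian_real_smul a hx).add (isHermitian_real_smul b hy)
    · intro x hx y hy a b ha hb hab
      have hx' : x.IsHermitian := hx
      have hy' : y.IsHermitian := hy
      have hA : (x + H₀).IsHermitian := hx'.add hH₀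
      have hB : (y + H₀).IsHermitian := hy'.add hH₀
      have hCher : ((a • x + b • y) + H₀).IsHermitian :=
        ((isHermitian_real_smul a hx').add (isHermitian_real_smul b hy')).add hH₀
      set C := (a • x + b • y) + H₀ with hCdef
      have hCC : C = a • (x + H₀) + b • (y + H₀) := by
        have h7 : a • (x + H₀) + b • (y + H₀) = a • x + b • y + (a + b) • H₀ := by
          rw [smul_add, smul_add, add_smul]; abel
        rw [hCdef, h7, hab, one_smul]
      set W := (hCher.eigenvectorUnitary : Matrix (Fin n) (Fin n) ℂ) with hWdef
      have hW1 : star W * W = 1 := Matrix.mem_unitaryGroup_iff'.mp hCher.eigenvectorUnitary.2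
      have hW2 : W * star W = 1 := Matrix.mem_unitaryGroup_iff.mp hCher.eigenvectorUnitary.2
      -- eigenvalues of C as diagonal entries
      have hdiagC : ∀ k, (star W * C * W) k k = ((hCher.eigenvalues k : ℝ) : ℂ) := by
        intro k
        rw [hWdef, ← Unitary.conjStarAlgAut_star_apply (S := ℂ),
          hCher.conjStarAlgAut_star_eigenvectorUnitary]
        simp [Matrix.diagonal_apply_eq]
      have hsplit : star W * C * W
          = a • (star W * (x + H₀) * W) + b • (star W * (y + H₀) * W) := by
        rw [hCC, Matrix.mul_add, Matrix.add_mul, Matrix.mul_smul, Matrix.smul_mul,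
          Matrix.mul_smul, Matrix.smul_mul]
      set sA : Fin n → ℝ := fun k => ∑ i,
        ‖((star (hA.eigenvectorUnitary : Matrix (Fin n) (Fin n) ℂ) * W)) i k‖ ^ 2
          * hA.eigenvalues i with hsAdef
      set sB : Fin n → ℝ := fun k => ∑ i,
        ‖((star (hB.eigenvectorUnitary : Matrix (Fin n) (Fin n) ℂ) * W)) i k‖ ^ 2
          * hB.eigenvalues i with hsBdef
      have hkey : ∀ k, hCher.eigenvalues k = a * sA k + b * sB k := by
        intro k
        have h1 : ((hCher.eigenvalues k : ℝ) : ℂ) = ((a * sA k + b * sB k : ℝ) : ℂ) := by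
          rw [← hdiagC k, hsplit]
          rw [show (a • (star W * (x + H₀) * W) + b • (star W * (y + H₀) * W)) k k
            = a • ((star W * (x + H₀) * W) k k) + b • ((star W * (y + H₀) * W) k k) from rfl]
          rw [diag_repr (x + H₀) W hA k, diag_repr (y + H₀) W hB k,
            Complex.real_smul, Complex.real_smul]
          simp only [hsAdef, hsBdef]
          push_cast
          ring
        exact_mod_cast h1
      rw [hgval _ hCher, hgval x hA, hgval y hB]
      have step1 : ∀ k, f (hCher.eigenvalues k) ≤ a * f (sA k) + b * f (sB k) := by
        intro k
        rw [hkey k]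
        have := hconv.2 (Set.mem_univ (sA k)) (Set.mem_univ (sB k)) ha hb hab
        simpa [smul_eq_mul] using this
      have step2 : ∑ k, f (hCher.eigenvalues k)
          ≤ a * ∑ k, f (sA k) + b * ∑ k, f (sB k) := by
        calc ∑ k, f (hCher.eigenvalues k) ≤ ∑ k, (a * f (sA k) + b * f (sB k)) :=
              Finset.sum_le_sum fun k _ => step1 k
          _ = a * ∑ k, f (sA k) + b * ∑ k, f (sB k) := by
              rw [Finset.sum_add_distrib, Finset.mul_sum, Finset.mul_sum]
      have step3 : ∑ k, f (sA k) ≤ ∑ i, f (hA.eigenvalues i) :=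
        sum_f_le f hconv (x + H₀) W hA hW1 hW2
      have step4 : ∑ k, f (sB k) ≤ ∑ i, f (hB.eigenvalues i) :=
        sum_f_le f hconv (y + H₀) W hB hW1 hW2
      have : ∑ k, f (hCher.eigenvalues k)
          ≤ a * ∑ i, f (hA.eigenvalues i) + b * ∑ i, f (hB.eigenvalues i) := by
        refine le_trans step2 ?_
        have h5 : a * ∑ k, f (sA k) ≤ a * ∑ i, f (hA.eigenvalues i) :=
          mul_le_mul_of_nonneg_left step3 ha
        have h6 : b * ∑ k, f (sB k) ≤ b * ∑ i, f (hB.eigenvalues i) :=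
          mul_le_mul_of_nonneg_left step4 hb
        linarith
      have := mul_le_mul_of_nonneg_left this hn0
      simp only [smul_eq_mul]
      nlinarith [this]
  · -- Lipschitz
    intro H₁ H₂ h₁ h₂
    have hA : (H₁ + H₀).IsHermitian := h₁.add hH₀
    have hB : (H₂ + H₀).IsHermitian := h₂.add hH₀
    obtain ⟨p, hp0, hrow, hcol, hpeq⟩ := exists_weights (H₁ + H₀) (H₂ + H₀) hA hB
    set α : Fin n → ℝ := hA.eigenvalues with hαdef
    set β : Fin n → ℝ := hB.eigenvalues with hβdef
    set S := ∑ i, ∑ j, ‖H₁ i j - H₂ i j‖ ^ 2 with hSdef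
    have hS0 : 0 ≤ S := Finset.sum_nonneg fun i _ => Finset.sum_nonneg fun j _ => sq_nonneg _
    have hentries : ∑ i, ∑ j, ‖(H₁ + H₀) i j - (H₂ + H₀) i j‖ ^ 2 = S := by
      refine Finset.sum_congr rfl fun i _ => Finset.sum_congr rfl fun j _ => ?_
      congr 2
      simp [Matrix.add_apply]
    rw [hgval H₁ hA, hgval H₂ hB]
    -- rewrite difference
    have hT : (1 / (n : ℝ)) * ∑ i, f (α i) - (1 / (n : ℝ)) * ∑ i, f (β i)
        = (1 / (n : ℝ)) * (∑ i, f (α i) - ∑ j, f (β j)) := by ring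
    rw [hT, abs_mul, abs_of_nonneg hn0]
    -- express T as weighted double sum
    have hfα : ∑ i, f (α i) = ∑ i, ∑ j, p i j * f (α i) := by
      refine Finset.sum_congr rfl fun i _ => ?_
      rw [← Finset.sum_mul, hrow i, one_mul]
    have hfβ : ∑ j, f (β j) = ∑ i, ∑ j, p i j * f (β j) := by
      rw [Finset.sum_comm]
      refine Finset.sum_congr rfl fun j _ => ?_
      rw [← Finset.sum_mul, hcol j, one_mul]
    have hTeq : ∑ i, f (α i) - ∑ j, f (β j)
        = ∑ i, ∑ j, p i j * (f (α i) - f (β j)) := by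
      rw [hfα, hfβ, ← Finset.sum_sub_distrib]
      refine Finset.sum_congr rfl fun i _ => ?_
      rw [← Finset.sum_sub_distrib]
      exact Finset.sum_congr rfl fun j _ => by ring
    rw [hTeq]
    -- bound the double sum
    set R := ∑ i, ∑ j, p i j * |α i - β j| with hRdef
    have habs : |∑ i, ∑ j, p i j * (f (α i) - f (β j))| ≤ (L : ℝ) * R := by
      calc |∑ i, ∑ j, p i j * (f (α i) - f (β j))|
          ≤ ∑ i, |∑ j, p i j * (f (α i) - f (β j))| := Finset.abs_sum_le_sum_abs _ _
        _ ≤ ∑ i, ∑ j, |p i j * (f (α i) - f (β j))| :=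
            Finset.sum_le_sum fun i _ => Finset.abs_sum_le_sum_abs _ _
        _ ≤ ∑ i, ∑ j, p i j * ((L : ℝ) * |α i - β j|) := by
            refine Finset.sum_le_sum fun i _ => Finset.sum_le_sum fun j _ => ?_
            rw [abs_mul, abs_of_nonneg (hp0 i j)]
            refine mul_le_mul_of_nonneg_left ?_ (hp0 i j)
            have := hlip.dist_le_mul (α i) (β j)
            rwa [Real.dist_eq, Real.dist_eq] at this
        _ = (L : ℝ) * R := by
            rw [hRdef, Finset.mul_sum]
            refine Finset.sum_congr rfl fun i _ => ?_
            rw [Finset.mul_sum]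
            exact Finset.sum_congr rfl fun j _ => by ring
    -- Cauchy-Schwarz
    have hR0 : 0 ≤ R := Finset.sum_nonneg fun i _ => Finset.sum_nonneg fun j _ =>
      mul_nonneg (hp0 i j) (abs_nonneg _)
    have hRsq : R ^ 2 ≤ (n : ℝ) * S := by
      have e1 : ∑ x : Fin n × Fin n, p x.1 x.2 * |α x.1 - β x.2| = R := by
        rw [hRdef, ← Finset.univ_product_univ, Finset.sum_product]
      have e2 : ∑ x : Fin n × Fin n, p x.1 x.2 = (n : ℝ) := by
        rw [← Finset.univ_product_univ, Finset.sum_product]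
        rw [show (∑ i : Fin n, ∑ j : Fin n, p i j) = ∑ i : Fin n, (1 : ℝ) from
          Finset.sum_congr rfl fun i _ => hrow i]
        simp
      have e3 : ∑ x : Fin n × Fin n, p x.1 x.2 * (α x.1 - β x.2) ^ 2 = S := by
        rw [← Finset.univ_product_univ, Finset.sum_product, hpeq, hentries]
      have hcs := Finset.sum_sq_le_sum_mul_sum_of_sq_eq_mul (Finset.univ : Finset (Fin n × Fin n))
        (r := fun x => p x.1 x.2 * |α x.1 - β x.2|)
        (f := fun x => p x.1 x.2)
        (g := fun x => p x.1 x.2 * (α x.1 - β x.2) ^ 2)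
        (fun x _ => hp0 x.1 x.2)
        (fun x _ => mul_nonneg (hp0 x.1 x.2) (sq_nonneg _))
        (fun x _ => by rw [mul_pow, sq_abs]; ring)
      rw [e1, e2, e3] at hcs
      exact hcs
    have hRle : R ≤ Real.sqrt n * Real.sqrt S := by
      rw [← Real.sqrt_mul (Nat.cast_nonneg n)]
      rw [show R = Real.sqrt (R ^ 2) from (Real.sqrt_sq hR0).symm]
      exact Real.sqrt_le_sqrt hRsq
    calc (1 / (n : ℝ)) * |∑ i, ∑ j, p i j * (f (α i) - f (β j))|
        ≤ (1 / (n : ℝ)) * ((L : ℝ) * R) := mul_le_mul_of_nonneg_left habs hn0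
      _ ≤ (1 / (n : ℝ)) * ((L : ℝ) * (Real.sqrt n * Real.sqrt S)) := by
          refine mul_le_mul_of_nonneg_left ?_ hn0
          exact mul_le_mul_of_nonneg_left hRle L.coe_nonneg
      _ = ((L : ℝ) / Real.sqrt n) * Real.sqrt S := arith_step n (L : ℝ) S L.coe_nonneg hS0
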